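/- arXiv:0906.4429 — 2 statements merged into one kernel-verified Lean document; each statement's English description precedes it below -/
import Mathlib

section
/- Suppose a rational function f ∈ k̄(t) together with nonzero elements α₁, …, α_s ∈ k̄ and rational functions μ₁, …, μ_s ∈ 𝔽_q(t) (viewed inside k̄(t) via the inclusion 𝔽_q ⊆ k̄) satisfies the σ-difference equation (t − θ)·f^{(-1)} − f = Σ_{i=1}^{s} μ_i · α_i^{(-1)} · (t − θ). Then f is regular at t = θ and its value there vanishes: f(θ) = 0. -/
open Polynomial

/-- The ring homomorphism `K(t) → L(t)` applying a field embedding `c : K → L` to all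
coefficients of the numerator and denominator of a rational function. -/
noncomputable def RatFunc.coeffMap {K L : Type*} [Field K] [Field L] (c : K →+* L) :
    RatFunc K →+* RatFunc L :=
  RatFunc.mapRingHom (Polynomial.mapRingHom c)
    (nonZeroDivisors_le_comap_nonZeroDivisors_of_injective _
      (Polynomial.map_injective _ c.injective))

namespace CarlitzAux

variable {K L : Type*} [Field K] [Field L]

/-- Regularity of a rational function at a point. -/
def Reg (a : K) (x : RatFunc K) : Prop := x.denom.eval a ≠ 0

lemma reg_of_dvd {a : K} {d e : K[X]} (h : d ∣ e) (he : e.eval a ≠ 0) : d.eval a ≠ 0 :=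
  fun h0 => he (Polynomial.eval_eq_zero_of_dvd_of_eval_eq_zero h h0)

lemma reg_iff {a : K} {x : RatFunc K} :
    Reg a x ↔ ∃ pq : K[X] × K[X], pq.2.eval a ≠ 0 ∧
      x = algebraMap _ _ pq.1 / algebraMap _ _ pq.2 := by
  constructor
  · intro h
    exact ⟨(x.num, x.denom), h, (RatFunc.num_div_denom x).symm⟩
  · rintro ⟨⟨pp, qq⟩, hq, rfl⟩
    have hq0 : qq ≠ 0 := fun h => hq (by simp [h])
    exact reg_of_dvd ((RatFunc.denom_dvd hq0).mpr ⟨pp, rfl⟩) hq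

lemma reg_add {a : K} {x y : RatFunc K} (hx : Reg a x) (hy : Reg a y) : Reg a (x + y) :=
  reg_of_dvd (RatFunc.denom_add_dvd x y) (by rw [Polynomial.eval_mul]; exact mul_ne_zero hx hy)

lemma reg_mul {a : K} {x y : RatFunc K} (hx : Reg a x) (hy : Reg a y) : Reg a (x * y) :=
  reg_of_dvd (RatFunc.denom_mul_dvd x y) (by rw [Polynomial.eval_mul]; exact mul_ne_zero hx hy)

lemma reg_neg {a : K} {x : RatFunc K} (hx : Reg a x) : Reg a (-x) := by
  rw [reg_iff]
  refine ⟨(-x.num, x.denom), hx, ?_⟩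
  rw [map_neg, neg_div, RatFunc.num_div_denom]

lemma reg_sub {a : K} {x y : RatFunc K} (hx : Reg a x) (hy : Reg a y) : Reg a (x - y) := by
  rw [sub_eq_add_neg]; exact reg_add hx (reg_neg hy)

lemma reg_poly (a : K) (p : K[X]) : Reg a (algebraMap _ (RatFunc K) p) := by
  unfold Reg
  rw [RatFunc.denom_algebraMap]
  simp

lemma reg_C (a : K) (c : K) : Reg a (RatFunc.C c) := by
  rw [← RatFunc.algebraMap_C]; exact reg_poly a _

lemma reg_zero (a : K) : Reg a (0 : RatFunc K) := by
  simpa using reg_poly a 0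

lemma reg_sum {ι : Type*} (s : Finset ι) (a : K) (g : ι → RatFunc K)
    (h : ∀ i ∈ s, Reg a (g i)) : Reg a (∑ i ∈ s, g i) :=
  Finset.sum_induction g (Reg a) (fun _ _ => reg_add) (reg_zero a) h

lemma coeffMap_div (c : K →+* L) (p q : K[X]) :
    RatFunc.coeffMap c (algebraMap _ _ p / algebraMap _ _ q) =
      algebraMap _ _ (p.map c) / algebraMap _ _ (q.map c) := by
  have h := RatFunc.map_apply_div (Polynomial.mapRingHom c)
    (nonZeroDivisors_le_comap_nonZeroDivisors_of_injective _
      (Polynomial.map_injective _ c.injective)) p q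
  simp only [Polynomial.coe_mapRingHom] at h
  exact (congrFun (RatFunc.coe_mapRingHom_eq_coe_map (Polynomial.mapRingHom c) _) _).trans h

lemma coeffMap_apply (c : K →+* L) (x : RatFunc K) :
    RatFunc.coeffMap c x = algebraMap _ _ (x.num.map c) / algebraMap _ _ (x.denom.map c) := by
  conv_lhs => rw [← RatFunc.num_div_denom x]
  exact coeffMap_div c x.num x.denom

lemma reg_coeffMap (c : K →+* L) {a : K} {x : RatFunc K} (h : Reg a x) :
    Reg (c a) (RatFunc.coeffMap c x) := by
  rw [reg_iff]
  refine ⟨(x.num.map c, x.denom.map c), ?_, coeffMap_apply c x⟩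
  rw [Polynomial.eval_map, Polynomial.eval₂_at_apply]
  simpa [Reg] using h

lemma coeffMap_coeffMap (e : K ≃+* L) (x : RatFunc K) :
    RatFunc.coeffMap (e.symm : L →+* K) (RatFunc.coeffMap (e : K →+* L) x) = x := by
  rw [coeffMap_apply (e : K →+* L) x, coeffMap_div, Polynomial.map_map, Polynomial.map_map]
  have h : (e.symm : L →+* K).comp (e : K →+* L) = RingHom.id K := by
    ext z; simp
  rw [h, Polynomial.map_id, Polynomial.map_id, RatFunc.num_div_denom]

lemma reg_of_reg_coeffMap (e : K ≃+* K) {a : K} {x : RatFunc K}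
    (h : Reg (e a) (RatFunc.coeffMap (e : K →+* K) x)) : Reg a x := by
  have h2 := reg_coeffMap (e.symm : K →+* K) h
  rw [coeffMap_coeffMap] at h2
  have h3 : (e.symm : K →+* K) (e a) = a := e.symm_apply_apply a
  rwa [h3] at h2

end CarlitzAux

open CarlitzAux

/-- If `f ∈ k̄(t)`, nonzero `α₁, …, α_s ∈ k̄` and `μ₁, …, μ_s ∈ 𝔽_q(t)` satisfy
`(t − θ)·f⁽⁻¹⁾ − f = ∑ μᵢ·αᵢ⁽⁻¹⁾·(t − θ)`, then `f` is regular at `t = θ` and `f(θ) = 0`. -/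
theorem carlitz_f_vanishes_at_theta
    -- `q = p ^ m` is a prime power and `𝔽_q` is the field with `q` elements
    (p m q : ℕ) [Fact p.Prime] (hm : 0 < m) (hq : q = p ^ m)
    (Fq : Type*) [Field Fq] [Fintype Fq] [CharP Fq p] (hcard : Fintype.card Fq = q)
    -- `k̄` is an algebraic closure of `k = 𝔽_q(θ)`, and `θ` is the image of the variable
    (kbar : Type*) [Field kbar] [CharP kbar p] [PerfectRing kbar p]
    [Algebra (RatFunc Fq) kbar] [IsAlgClosure (RatFunc Fq) kbar]
    (θ : kbar) (hθ : θ = algebraMap (RatFunc Fq) kbar RatFunc.X)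
    -- `ψ : a ↦ a^{1/q}` is the inverse of the `q`-power Frobenius of `k̄`
    (ψ : kbar ≃+* kbar) (hψ : ψ = (iterateFrobeniusEquiv kbar p m).symm)
    -- the data `f`, `αᵢ`, `μᵢ`
    (s : ℕ) (α : Fin s → kbar) (hα : ∀ i, α i ≠ 0) (μ : Fin s → RatFunc Fq)
    (f : RatFunc kbar)
    -- the σ-difference equation `(t − θ)·f⁽⁻¹⁾ − f = ∑ μᵢ·αᵢ⁽⁻¹⁾·(t − θ)`
    (heq : (RatFunc.X - RatFunc.C θ) * RatFunc.coeffMap (ψ : kbar →+* kbar) f - f =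
      ∑ i, RatFunc.coeffMap
          ((algebraMap (RatFunc Fq) kbar).comp (algebraMap Fq (RatFunc Fq))) (μ i) *
        RatFunc.C (ψ (α i)) * (RatFunc.X - RatFunc.C θ)) :
    -- `f` is regular at `t = θ` and its value there vanishes
    Polynomial.eval θ f.denom ≠ 0 ∧ RatFunc.eval (RingHom.id kbar) θ f = 0 := by
  subst hq
  set ι : Fq →+* kbar := (algebraMap (RatFunc Fq) kbar).comp (algebraMap Fq (RatFunc Fq))
    with hι
  set g : RatFunc kbar := RatFunc.coeffMap (ψ : kbar →+* kbar) f with hg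
  set T : RatFunc kbar := ∑ i, RatFunc.coeffMap ι (μ i) * RatFunc.C (ψ (α i)) with hT
  have hp2 : 2 ≤ p := (Fact.out : p.Prime).two_le
  have hq2 : 1 < p ^ m := Nat.one_lt_pow hm.ne' (by omega)
  -- θ is transcendental over 𝔽_q
  have htrans0 : ∀ P : Polynomial Fq, P ≠ 0 → Polynomial.eval₂ ι θ P ≠ 0 := by
    intro P hP h0
    rw [hι, hθ] at h0
    rw [← Polynomial.hom_eval₂] at h0
    have h1 : Polynomial.eval₂ (algebraMap Fq (RatFunc Fq)) RatFunc.X P = 0 :=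
      (algebraMap (RatFunc Fq) kbar).injective (by simpa using h0)
    have h2 : (algebraMap Fq (RatFunc Fq)) =
        (algebraMap (Polynomial Fq) (RatFunc Fq)).comp Polynomial.C :=
      IsScalarTower.algebraMap_eq Fq (Polynomial Fq) (RatFunc Fq)
    rw [h2, ← RatFunc.algebraMap_X (K := Fq), ← Polynomial.hom_eval₂,
      Polynomial.eval₂_C_X] at h1
    exact RatFunc.algebraMap_ne_zero hP h1
  -- ψ fixes the image of 𝔽_q
  have hfixψ : ∀ c : Fq, ψ (ι c) = ι c := by
    intro c
    have h1 : (iterateFrobeniusEquiv kbar p m) (ι c) = ι c := by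
      rw [iterateFrobeniusEquiv_def, ← map_pow, ← hcard, FiniteField.pow_card]
    rw [hψ]
    conv_lhs => rw [← h1]
    exact (iterateFrobeniusEquiv kbar p m).symm_apply_apply _
  have hfixψs : ∀ c : Fq, ψ.symm (ι c) = ι c := by
    intro c
    conv_lhs => rw [← hfixψ c]
    exact ψ.symm_apply_apply _
  -- transport of transcendence along kbar-automorphisms fixing 𝔽_q
  have key : ∀ e : kbar ≃+* kbar, (∀ c : Fq, e (ι c) = ι c) → ∀ x : kbar,
      (∀ P : Polynomial Fq, P ≠ 0 → Polynomial.eval₂ ι x P ≠ 0) →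
      (∀ P : Polynomial Fq, P ≠ 0 → Polynomial.eval₂ ι (e x) P ≠ 0) := by
    intro e hfixe x hx P hP h0
    have hcomp : (e : kbar →+* kbar).comp ι = ι := RingHom.ext hfixe
    have hre : Polynomial.eval₂ ι (e x) P = e (Polynomial.eval₂ ι x P) := by
      have h3 := Polynomial.hom_eval₂ (p := P) (f := ι) (g := (e : kbar →+* kbar)) x
      rw [hcomp] at h3
      simpa using h3.symm
    rw [hre] at h0
    exact hx P hP (by simpa using h0)
  have htransn : ∀ n : ℕ, ∀ P : Polynomial Fq, P ≠ 0 →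
      Polynomial.eval₂ ι (ψ^[n] θ) P ≠ 0 := by
    intro n
    induction n with
    | zero => simpa using htrans0
    | succ n ih =>
      rw [Function.iterate_succ_apply']
      exact key ψ hfixψ _ ih
  have htranssn : ∀ n : ℕ, ∀ P : Polynomial Fq, P ≠ 0 →
      Polynomial.eval₂ ι (ψ.symm^[n] θ) P ≠ 0 := by
    intro n
    induction n with
    | zero => simpa using htrans0
    | succ n ih =>
      rw [Function.iterate_succ_apply']
      exact key ψ.symm hfixψs _ ih
  -- iterates of ψ.symm are q-power maps
  have hsymm_iter : ∀ (n : ℕ) (x : kbar), ψ.symm^[n] x = x ^ (p ^ m) ^ n := by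
    intro n
    induction n with
    | zero => intro x; simp
    | succ n ih =>
      intro x
      rw [Function.iterate_succ_apply, ih, hψ, RingEquiv.symm_symm,
        iterateFrobeniusEquiv_def, ← pow_mul, ← pow_succ']
  -- θ is not fixed by any positive iterate of ψ.symm
  have hne : ∀ k : ℕ, k ≠ 0 → ψ.symm^[k] θ ≠ θ := by
    intro k hk h
    have hpow : θ ^ (p ^ m) ^ k = θ := by rw [← hsymm_iter]; exact h
    have hN : 1 < (p ^ m) ^ k := Nat.one_lt_pow hk hq2
    refine htrans0 (Polynomial.X ^ ((p ^ m) ^ k) - Polynomial.X) ?_ ?_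
    · intro h0
      have hc := congrArg (fun P => Polynomial.coeff P ((p ^ m) ^ k)) h0
      simp [Polynomial.coeff_X_pow, Polynomial.coeff_X, hN.ne, hN.ne'] at hc
    · simp only [Polynomial.eval₂_sub, Polynomial.eval₂_pow, Polynomial.eval₂_X]
      rw [sub_eq_zero]
      exact hpow
  have hneψ : ∀ k : ℕ, k ≠ 0 → ψ^[k] θ ≠ θ := by
    intro k hk h
    have h2 := (Function.LeftInverse.iterate ψ.symm_apply_apply k) θ
    rw [h] at h2
    exact hne k hk h2
  -- injectivity of the iterate orbits
  have hinj : ∀ e : kbar ≃+* kbar, (∀ k : ℕ, k ≠ 0 → e^[k] θ ≠ θ) →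
      Function.Injective fun n : ℕ => e^[n] θ := by
    intro e he
    have hlt : ∀ n k : ℕ, n < k → e^[n] θ ≠ e^[k] θ := by
      intro n k hnk h
      have h2 : e^[n] θ = e^[n] (e^[k - n] θ) := by
        rw [← Function.iterate_add_apply, Nat.add_sub_cancel' hnk.le]
        exact h
      exact he (k - n) (by omega) ((e.injective.iterate n) h2).symm
    intro n k h
    rcases lt_trichotomy n k with hnk | hnk | hnk
    · exact absurd h (hlt n k hnk)
    · exact hnk
    · exact absurd h.symm (hlt k n hnk)
  -- `X - C θ` as a polynomial, and its regularity
  have hXC : RatFunc.X - RatFunc.C θ =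
      algebraMap (Polynomial kbar) (RatFunc kbar) (Polynomial.X - Polynomial.C θ) := by
    rw [map_sub, RatFunc.algebraMap_X, RatFunc.algebraMap_C]
  have regXC : ∀ a : kbar, Reg a (RatFunc.X - RatFunc.C θ) := by
    intro a; rw [hXC]; exact reg_poly a _
  -- T is regular at transcendental points
  have hregT : ∀ a : kbar, (∀ P : Polynomial Fq, P ≠ 0 → Polynomial.eval₂ ι a P ≠ 0) →
      Reg a T := by
    intro a ha
    apply reg_sum
    intro i _
    apply reg_mul
    · rw [reg_iff]
      refine ⟨((μ i).num.map ι, (μ i).denom.map ι), ?_, coeffMap_apply ι (μ i)⟩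
      rw [Polynomial.eval_map]
      exact ha _ (RatFunc.denom_ne_zero (μ i))
    · exact reg_C a _
  -- the difference equation in product form
  have hf : f = (RatFunc.X - RatFunc.C θ) * (g - T) := by
    rw [← Finset.sum_mul] at heq
    rw [← hT] at heq
    linear_combination -heq
  -- upward pole propagation
  have hup : ∀ a : kbar, (∀ P : Polynomial Fq, P ≠ 0 → Polynomial.eval₂ ι a P ≠ 0) →
      f.denom.eval a = 0 → f.denom.eval (ψ.symm a) = 0 := by
    intro a ha hpole
    by_contra hreg
    have h1 : Reg (ψ (ψ.symm a)) g := reg_coeffMap (ψ : kbar →+* kbar) hreg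
    rw [RingEquiv.apply_symm_apply] at h1
    have h2 : Reg a f := by
      rw [hf]
      exact reg_mul (regXC a) (reg_sub h1 (hregT a ha))
    exact h2 hpole
  -- downward pole propagation
  have hdown : ∀ a : kbar, f.denom.eval a = 0 → ψ a ≠ θ →
      (∀ P : Polynomial Fq, P ≠ 0 → Polynomial.eval₂ ι (ψ a) P ≠ 0) →
      f.denom.eval (ψ a) = 0 := by
    intro a hpole hneθ ha
    by_contra hreg
    have hregInv : Reg (ψ a) ((RatFunc.X - RatFunc.C θ)⁻¹) := by
      rw [reg_iff]
      refine ⟨(1, Polynomial.X - Polynomial.C θ), ?_, ?_⟩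
      · simpa [sub_eq_zero] using hneθ
      · rw [map_one, one_div, hXC]
    have hL0 : (RatFunc.X - RatFunc.C θ : RatFunc kbar) ≠ 0 := by
      rw [hXC]
      apply RatFunc.algebraMap_ne_zero
      exact Polynomial.X_sub_C_ne_zero θ
    have hgeq : g = (RatFunc.X - RatFunc.C θ)⁻¹ * f + T := by
      rw [hf]
      field_simp
      ring
    have h1 : Reg (ψ a) g := by
      rw [hgeq]
      exact reg_add (reg_mul hregInv hreg) (hregT _ ha)
    have h2 : Reg a f := reg_of_reg_coeffMap ψ (by rwa [← hg])
    exact h2 hpole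
  -- f is regular at θ
  have hth : f.denom.eval θ ≠ 0 := by
    intro h0
    have hall : ∀ n : ℕ, f.denom.eval (ψ^[n] θ) = 0 := by
      intro n
      induction n with
      | zero => simpa using h0
      | succ n ih =>
        have h1 := hdown (ψ^[n] θ) ih
          (by rw [← Function.iterate_succ_apply' (⇑ψ) n θ]; exact hneψ (n + 1) (by omega))
          (by rw [← Function.iterate_succ_apply' (⇑ψ) n θ]; exact htransn (n + 1))
        rwa [← Function.iterate_succ_apply' (⇑ψ) n θ] at h1
    have hinf : {x : kbar | f.denom.IsRoot x}.Infinite :=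
      Set.infinite_of_injective_forall_mem (hinj ψ hneψ) (fun n => hall n)
    exact RatFunc.denom_ne_zero f (Polynomial.eq_zero_of_infinite_isRoot _ hinf)
  -- g is regular at θ
  have hgθ : Reg θ g := by
    by_contra h0
    have hpole : f.denom.eval (ψ.symm θ) = 0 := by
      by_contra hreg
      have h1 : Reg (ψ (ψ.symm θ)) g := reg_coeffMap (ψ : kbar →+* kbar) hreg
      rw [RingEquiv.apply_symm_apply] at h1
      exact h0 h1
    have hall : ∀ n : ℕ, f.denom.eval (ψ.symm^[n + 1] θ) = 0 := by
      intro n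
      induction n with
      | zero => simpa using hpole
      | succ n ih =>
        have h1 := hup (ψ.symm^[n + 1] θ) (htranssn (n + 1)) ih
        rwa [← Function.iterate_succ_apply' (⇑ψ.symm) (n + 1) θ] at h1
    have hinjs : Function.Injective fun n : ℕ => ψ.symm^[n + 1] θ := by
      intro n k h
      have := hinj ψ.symm hne (show ψ.symm^[n+1] θ = ψ.symm^[k+1] θ from h)
      omega
    have hinf : {x : kbar | f.denom.IsRoot x}.Infinite :=
      Set.infinite_of_injective_forall_mem hinjs (fun n => hall n)
    exact RatFunc.denom_ne_zero f (Polynomial.eq_zero_of_infinite_isRoot _ hinf)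
  refine ⟨hth, ?_⟩
  -- now evaluate the equation at θ
  have hw : Reg θ (g - T) := reg_sub hgθ (hregT θ (by simpa using htransn 0))
  rw [hf]
  have hev := RatFunc.eval_mul (K := kbar) (f := RingHom.id kbar) (a := θ)
    (x := RatFunc.X - RatFunc.C θ) (y := g - T) (regXC θ) hw
  rw [hev]
  have hevalXC : RatFunc.eval (RingHom.id kbar) θ (RatFunc.X - RatFunc.C θ) = 0 := by
    rw [hXC, RatFunc.eval_algebraMap]
    simp
  rw [hevalXC, zero_mul]
end

section
/- Let R be a ring, U an R-module, and Y ⊆ U a submodule which is semisimple and of finite length as an R-module. Then there exists a smallest submodule V ⊆ Y such that the natural quotient map U/V → U/Y admits an R-linear section; that is, V has this splitting property and V is contained in every submodule W ⊆ Y for which U/W → U/Y admits an R-linear section. -/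
/-- For submodules `W ≤ Y` of an `R`-module `U`, this says that the natural quotient map
`U/W → U/Y` admits an `R`-linear section. -/
def QuotMapHasSection {R U : Type*} [Ring R] [AddCommGroup U] [Module R U]
    (W Y : Submodule R U) (h : W ≤ Y) : Prop :=
  ∃ s : (U ⧸ Y) →ₗ[R] U ⧸ W,
    (Submodule.mapQ W Y LinearMap.id h) ∘ₗ s = LinearMap.id

open Submodule LinearMap in
theorem aux_exists_section {R M N : Type*} [Ring R] [AddCommGroup M] [Module R M]
    [AddCommGroup N] [Module R N] [IsSemisimpleModule R M]
    (f : M →ₗ[R] N) (hf : Function.Surjective f) :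
    ∃ g : N →ₗ[R] M, f ∘ₗ g = LinearMap.id := by
  obtain ⟨c, hc⟩ := exists_isCompl (LinearMap.ker f)
  let e : (M ⧸ LinearMap.ker f) ≃ₗ[R] c := Submodule.quotientEquivOfIsCompl _ c hc
  let q : (M ⧸ LinearMap.ker f) ≃ₗ[R] N := f.quotKerEquivOfSurjective hf
  refine ⟨c.subtype ∘ₗ (e.toLinearMap ∘ₗ q.symm.toLinearMap), ?_⟩
  ext n
  set z : M ⧸ LinearMap.ker f := q.symm n with hz
  set x : c := e z with hx
  have h1 : Submodule.Quotient.mk (x : M) = z := by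
    have := Submodule.quotientEquivOfIsCompl_symm_apply (LinearMap.ker f) c hc x
    rw [← this, hx, LinearEquiv.symm_apply_apply]
  have h2 : q (Submodule.Quotient.mk (x : M)) = n := by
    rw [h1, hz, LinearEquiv.apply_symm_apply]
  have h3 : q (Submodule.Quotient.mk (x : M)) = f (x : M) := rfl
  simpa [h3] using h2

theorem aux_ker_mapQ {R U : Type*} [Ring R] [AddCommGroup U] [Module R U]
    (W Y : Submodule R U) (h : W ≤ Y) :
    LinearMap.ker (Submodule.mapQ W Y LinearMap.id h) = Y.map W.mkQ := by
  rw [Submodule.mapQ, Submodule.ker_liftQ]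
  congr 1
  rw [LinearMap.ker_comp, Submodule.ker_mkQ]
  simp

theorem aux_mapQ_comp_mapQ {R U : Type*} [Ring R] [AddCommGroup U] [Module R U]
    (A B C : Submodule R U) (hAB : A ≤ B) (hBC : B ≤ C) :
    (Submodule.mapQ B C LinearMap.id hBC) ∘ₗ (Submodule.mapQ A B LinearMap.id hAB)
      = Submodule.mapQ A C LinearMap.id (hAB.trans hBC) := by
  apply Submodule.linearMap_qext
  ext x
  simp [Submodule.mapQ_apply]

theorem quotMapHasSection_inf {R U : Type*} [Ring R] [AddCommGroup U] [Module R U]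
    {W W' Y : Submodule R U} (hW : W ≤ Y) (hW' : W' ≤ Y)
    (hY : IsSemisimpleModule R Y)
    (h1 : QuotMapHasSection W Y hW) (h2 : QuotMapHasSection W' Y hW') :
    QuotMapHasSection (W ⊓ W') Y (inf_le_left.trans hW) := by
  obtain ⟨s1, hs1⟩ := h1
  obtain ⟨s2, hs2⟩ := h2
  set K : Submodule R U := W ⊓ W' with hK
  have hSY : W ⊔ W' ≤ Y := sup_le hW hW'
  set S : Submodule R U := W ⊔ W' with hSdef
  set g1 : (U ⧸ W) →ₗ[R] U ⧸ S := Submodule.mapQ W S LinearMap.id le_sup_left with hg1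
  set g2 : (U ⧸ W') →ₗ[R] U ⧸ S := Submodule.mapQ W' S LinearMap.id le_sup_right with hg2
  set f1 : (U ⧸ K) →ₗ[R] U ⧸ W := Submodule.mapQ K W LinearMap.id inf_le_left with hf1
  set f2 : (U ⧸ K) →ₗ[R] U ⧸ W' := Submodule.mapQ K W' LinearMap.id inf_le_right with hf2
  set d : (U ⧸ Y) →ₗ[R] U ⧸ S := g1 ∘ₗ s1 - g2 ∘ₗ s2 with hd
  -- d lands in Y.map S.mkQ
  have hdmem : ∀ z, d z ∈ Y.map S.mkQ := by
    intro z
    rw [← aux_ker_mapQ S Y hSY, LinearMap.mem_ker]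
    have : (Submodule.mapQ S Y LinearMap.id hSY) ∘ₗ d = 0 := by
      rw [hd, LinearMap.comp_sub, ← LinearMap.comp_assoc, ← LinearMap.comp_assoc,
        aux_mapQ_comp_mapQ W S Y le_sup_left hSY, aux_mapQ_comp_mapQ W' S Y le_sup_right hSY,
        hs1, hs2, sub_self]
    exact LinearMap.ext_iff.mp this z
  -- the semisimple submodule Q = Y.map W'.mkQ of U ⧸ W'
  set Q : Submodule R (U ⧸ W') := Y.map W'.mkQ with hQ
  have hQrange : Q = LinearMap.range (W'.mkQ ∘ₗ Y.subtype) := by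
    rw [LinearMap.range_comp, Submodule.range_subtype]
  haveI hQss : IsSemisimpleModule R Q := by
    rw [hQrange]; exact IsSemisimpleModule.range _
  set P : Submodule R (U ⧸ S) := Y.map S.mkQ with hP
  -- g2 restricts to a surjection Q → P
  have hg2QP : ∀ x ∈ Q, g2 x ∈ P := by
    rintro x ⟨y, hy, rfl⟩
    exact ⟨y, hy, rfl⟩
  set π : Q →ₗ[R] P := g2.restrict hg2QP with hπ
  have hπsurj : Function.Surjective π := by
    rintro ⟨p, y, hy, rfl⟩
    refine ⟨⟨W'.mkQ y, y, hy, rfl⟩, ?_⟩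
    apply Subtype.ext
    simp [hπ, LinearMap.restrict_apply, hg2, Submodule.mkQ_apply, Submodule.mapQ_apply]
  obtain ⟨σ, hσ⟩ := aux_exists_section π hπsurj
  set d' : (U ⧸ Y) →ₗ[R] P := d.codRestrict P hdmem with hd'
  set s2' : (U ⧸ Y) →ₗ[R] U ⧸ W' := s2 + Q.subtype ∘ₗ σ ∘ₗ d' with hs2'
  -- s2' is still a section
  have hzero : (Submodule.mapQ W' Y LinearMap.id hW') ∘ₗ Q.subtype = 0 := by
    apply LinearMap.ext
    rintro ⟨x, y, hy, rfl⟩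
    simp only [LinearMap.comp_apply, Submodule.subtype_apply, LinearMap.zero_apply,
      Submodule.mkQ_apply, Submodule.mapQ_apply, LinearMap.id_apply]
    rwa [Submodule.Quotient.mk_eq_zero]
  have hs2'sec : (Submodule.mapQ W' Y LinearMap.id hW') ∘ₗ s2' = LinearMap.id := by
    rw [hs2', LinearMap.comp_add, hs2, ← LinearMap.comp_assoc, ← LinearMap.comp_assoc,
      hzero, LinearMap.zero_comp, LinearMap.zero_comp, add_zero]
  -- g2 ∘ s2' = g1 ∘ s1
  have hg2Qsub : g2 ∘ₗ Q.subtype = P.subtype ∘ₗ π := by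
    apply LinearMap.ext; intro x
    simp [hπ, LinearMap.restrict_apply]
  have hcompat : g2 ∘ₗ s2' = g1 ∘ₗ s1 := by
    have hPd : P.subtype ∘ₗ d' = d := LinearMap.subtype_comp_codRestrict d P hdmem
    rw [hs2', LinearMap.comp_add]
    have : g2 ∘ₗ (Q.subtype ∘ₗ σ ∘ₗ d') = d := by
      rw [← LinearMap.comp_assoc, hg2Qsub, LinearMap.comp_assoc, ← LinearMap.comp_assoc d' σ π,
        hσ, LinearMap.id_comp, hPd]
    rw [this, hd]
    abel
  -- assemble the section into U ⧸ K
  set Φ : (U ⧸ K) →ₗ[R] (U ⧸ W) × (U ⧸ W') := f1.prod f2 with hΦ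
  have hΦinj : Function.Injective Φ := by
    rw [← LinearMap.ker_eq_bot]
    rw [Submodule.eq_bot_iff]
    intro x hx
    obtain ⟨u, rfl⟩ := K.mkQ_surjective x
    have h1 : f1 (K.mkQ u) = 0 := congrArg Prod.fst hx
    have h2 : f2 (K.mkQ u) = 0 := congrArg Prod.snd hx
    simp only [hf1, hf2, Submodule.mkQ_apply, Submodule.mapQ_apply, LinearMap.id_apply,
      Submodule.Quotient.mk_eq_zero] at h1 h2
    rw [Submodule.mkQ_apply, Submodule.Quotient.mk_eq_zero]
    exact ⟨h1, h2⟩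
  have hmem : ∀ z, (s1 z, s2' z) ∈ LinearMap.range Φ := by
    intro z
    obtain ⟨x, hx⟩ := W.mkQ_surjective (s1 z)
    obtain ⟨y, hy⟩ := W'.mkQ_surjective (s2' z)
    have hxy : x - y ∈ S := by
      have := LinearMap.ext_iff.mp hcompat z
      simp only [LinearMap.comp_apply] at this
      rw [← hx, ← hy] at this
      simp only [hg1, hg2, Submodule.mkQ_apply, Submodule.mapQ_apply, LinearMap.id_apply] at this
      rw [Submodule.Quotient.eq] at this
      have := S.neg_mem this
      rwa [neg_sub] at this
    obtain ⟨w, hw, w', hw', hww'⟩ := Submodule.mem_sup.mp hxy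
    refine ⟨K.mkQ (x - w), ?_⟩
    have e1 : f1 (K.mkQ (x - w)) = s1 z := by
      rw [← hx]
      simp only [hf1, Submodule.mkQ_apply, Submodule.mapQ_apply, LinearMap.id_apply]
      rw [Submodule.Quotient.eq]
      simpa using W.neg_mem hw
    have e2 : f2 (K.mkQ (x - w)) = s2' z := by
      rw [← hy]
      simp only [hf2, Submodule.mkQ_apply, Submodule.mapQ_apply, LinearMap.id_apply]
      rw [Submodule.Quotient.eq]
      have h' : w' = x - y - w := by rw [← hww']; abel
      have : x - w - y = w' := by rw [h']; abel
      rw [this]; exact hw'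
    ext
    · simpa [hΦ] using e1
    · simpa [hΦ] using e2
  set Ψ := LinearEquiv.ofInjective Φ hΦinj with hΨ
  set s : (U ⧸ Y) →ₗ[R] U ⧸ K :=
    Ψ.symm.toLinearMap ∘ₗ ((s1.prod s2').codRestrict (LinearMap.range Φ) (by
      intro z; simpa using hmem z)) with hs
  have hΦs : ∀ z, Φ (s z) = (s1 z, s2' z) := by
    intro z
    have : Φ (Ψ.symm ⟨(s1 z, s2' z), hmem z⟩) = (s1 z, s2' z) := by
      have := Ψ.apply_symm_apply ⟨(s1 z, s2' z), hmem z⟩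
      calc Φ (Ψ.symm ⟨(s1 z, s2' z), hmem z⟩)
          = (Ψ (Ψ.symm ⟨(s1 z, s2' z), hmem z⟩) : (U ⧸ W) × (U ⧸ W')) := by
            rw [hΨ]; rfl
        _ = (s1 z, s2' z) := by rw [this]
    exact this
  have hf1s : f1 ∘ₗ s = s1 := by
    apply LinearMap.ext; intro z
    have := congrArg Prod.fst (hΦs z)
    simpa [hΦ] using this
  refine ⟨s, ?_⟩
  have : Submodule.mapQ K Y LinearMap.id (inf_le_left.trans hW)
      = (Submodule.mapQ W Y LinearMap.id hW) ∘ₗ f1 :=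
    (aux_mapQ_comp_mapQ K W Y inf_le_left hW).symm
  rw [this, LinearMap.comp_assoc, hf1s, hs1]

/-- Let `Y ⊆ U` be a submodule which is semisimple and of finite length as an `R`-module.
Then there is a smallest submodule `V ⊆ Y` such that the natural quotient map `U/V → U/Y`
admits an `R`-linear section. -/
theorem exists_smallest_submodule_quotMapHasSection
    {R U : Type*} [Ring R] [AddCommGroup U] [Module R U]
    (Y : Submodule R U) (hY : IsSemisimpleModule R Y) (hfin : IsFiniteLength R Y) :
    ∃ (V : Submodule R U) (hV : V ≤ Y), QuotMapHasSection V Y hV ∧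
      ∀ (W : Submodule R U) (hW : W ≤ Y), QuotMapHasSection W Y hW → V ≤ W := by
  have hNA := isFiniteLength_iff_isNoetherian_isArtinian.mp hfin
  haveI := hNA.2
  have wf : WellFounded (· < · : Submodule R Y → Submodule R Y → Prop) :=
    (isArtinian_iff R Y).mp inferInstance
  set T : Set (Submodule R Y) :=
    {V' | ∃ (V : Submodule R U) (hV : V ≤ Y),
      QuotMapHasSection V Y hV ∧ V' = V.comap Y.subtype} with hT
  have hYsec : QuotMapHasSection Y Y le_rfl := by
    refine ⟨LinearMap.id, ?_⟩
    rw [LinearMap.comp_id]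
    exact Submodule.mapQ_id _
  have hYT : ⊤ ∈ T := ⟨Y, le_rfl, hYsec, by rw [Submodule.comap_subtype_self]⟩
  obtain ⟨V', hV'T, hminV'⟩ := wf.has_min T ⟨⊤, hYT⟩
  obtain ⟨V, hV, hVsec, rfl⟩ := hV'T
  refine ⟨V, hV, hVsec, ?_⟩
  intro W hW hWsec
  have hKsec := quotMapHasSection_inf hV hW hY hVsec hWsec
  have hKle : V ⊓ W ≤ Y := inf_le_left.trans hV
  have hKT : (V ⊓ W).comap Y.subtype ∈ T := ⟨V ⊓ W, hKle, hKsec, rfl⟩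
  have hle : (V ⊓ W).comap Y.subtype ≤ V.comap Y.subtype :=
    Submodule.comap_mono inf_le_left
  have heq : (V ⊓ W).comap Y.subtype = V.comap Y.subtype :=
    hle.lt_or_eq.resolve_left (fun hlt => hminV' _ hKT hlt)
  have hmapeq : Y ⊓ (V ⊓ W) = Y ⊓ V := by
    have := congrArg (Submodule.map Y.subtype) heq
    rwa [Submodule.map_comap_subtype, Submodule.map_comap_subtype] at this
  rw [inf_eq_right.mpr hKle, inf_eq_right.mpr hV] at hmapeq
  calc V = V ⊓ W := hmapeq.symm
    _ ≤ W := inf_le_right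
end
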